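/- Let φ be a positive long root perpendicular to the highest root θ, and let w ∈ W be the minimal-length element with wφ = θ. Then wθ is a positive root perpendicular to θ, lying in the span of the simple roots perpendicular to θ, and the set {θ} ∪ {θ − ψ : ψ ∈ Φ_w} ∪ {wθ} corresponds to an abelian ideal a^{φ,min⁺} = a^{φ,min} ⊕ g_{wθ} of b. -/

import Mathlib

open scoped RealInnerProductSpace BigOperators

noncomputable section

variable (V : Type) [NormedAddCommGroup V] [InnerProductSpace ℝ V] [FiniteDimensional ℝ V]

/-- A finite, reduced, crystallographic root system in a Euclidean space `V`,
with a chosen set of positive roots and the corresponding simple roots. -/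
structure RootSystemData where
  /-- the rank -/
  l : ℕ
  /-- the simple roots -/
  simple : Fin l → V
  /-- the set of roots -/
  roots : Finset V
  /-- the set of positive roots -/
  pos : Finset V
  pos_subset : pos ⊆ roots
  simple_mem_pos : ∀ i, simple i ∈ pos
  simple_indep : LinearIndependent ℝ simple
  span_roots : Submodule.span ℝ (roots : Set V) = ⊤
  root_ne_zero : ∀ α ∈ roots, α ≠ 0
  neg_mem : ∀ α ∈ roots, -α ∈ roots
  pos_iff : ∀ α ∈ roots, (α ∈ pos ↔ -α ∉ pos)
  pos_combo : ∀ α ∈ pos, ∃ c : Fin l → ℕ, α = ∑ i, (c i : ℝ) • simple i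
  crystal : ∀ α ∈ roots, ∀ β ∈ roots, ∃ n : ℤ, 2 * ⟪β, α⟫ / ⟪α, α⟫ = (n : ℝ)
  reflect_mem : ∀ α ∈ roots, ∀ β ∈ roots, β - (2 * ⟪β, α⟫ / ⟪α, α⟫) • α ∈ roots
  sub_mem : ∀ α ∈ roots, ∀ β ∈ roots, 0 < ⟪α, β⟫ → α ≠ β → α - β ∈ roots
  reduced : ∀ α ∈ roots, ∀ c : ℝ, c • α ∈ roots → c = 1 ∨ c = -1

namespace RootSystemData

open Classical

variable {V}

/-- The pairing `⟨λ, α∨⟩ = 2(λ|α)/(α|α)` of a vector with the coroot of `α`. -/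
def pair (lam α : V) : ℝ := 2 * ⟪lam, α⟫ / ⟪α, α⟫

/-- The orthogonal reflection in the hyperplane orthogonal to `α`. -/
def sRefl (α : V) : V ≃ₗᵢ[ℝ] V := Submodule.reflection ((ℝ ∙ α)ᗮ)

variable (R : RootSystemData V)

/-- Half the sum of the positive roots. -/
def ρ : V := (2 : ℝ)⁻¹ • ∑ φ ∈ R.pos, φ

/-- The (finite) Weyl group, generated by the simple reflections. -/
def W : Subgroup (V ≃ₗᵢ[ℝ] V) :=
  Subgroup.closure (Set.range fun i => sRefl (R.simple i))

/-- The length of a Weyl group element: the minimal length of a word in the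
simple reflections expressing it. -/
def len (w : V ≃ₗᵢ[ℝ] V) : ℕ :=
  sInf {k : ℕ | ∃ f : Fin k → Fin R.l,
    w = (List.ofFn fun j => sRefl (R.simple (f j))).prod}

/-- The inversion set `Φ_w = Φ₊ ∩ wΦ₋`. -/
def inversions (w : V ≃ₗᵢ[ℝ] V) : Finset V :=
  R.pos.filter fun x => -(w.symm x) ∈ R.pos

end RootSystemData

/-- An irreducible root system, together with its highest root `θ`. -/
structure IrredRootSystemData extends RootSystemData V where
  /-- the highest root -/
  θ : V
  θ_mem_pos : θ ∈ pos
  θ_highest : ∀ φ ∈ pos, ∃ c : Fin l → ℕ, θ - φ = ∑ i, (c i : ℝ) • simple i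
  θ_long : ∀ φ ∈ roots, ‖φ‖ ≤ ‖θ‖
  θ_dominant : ∀ i, 0 ≤ ⟪θ, simple i⟫
  irreducible : ∀ s : Finset V, s ⊆ roots →
      (∀ α ∈ s, ∀ β ∈ roots, β ∉ s → ⟪α, β⟫ = 0) → s = ∅ ∨ s = roots

namespace IrredRootSystemData

variable {V} (R : IrredRootSystemData V)

/-- The affine functional `L(φ) = 2(θ−φ|ρ)/(θ|θ)`. -/
def L (φ : V) : ℝ := 2 * ⟪R.θ - φ, R.toRootSystemData.ρ⟫ / ⟪R.θ, R.θ⟫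

/-- A root is long if it has the same length as the highest root. -/
def IsLong (φ : V) : Prop := ‖φ‖ = ‖R.θ‖

/-- The dual Coxeter number `g = ⟨ρ, θ∨⟩ + 1`. -/
def dualCox : ℝ := RootSystemData.pair R.toRootSystemData.ρ R.θ + 1

/-- The affine reflection `s₀(λ) = λ − (⟨λ,θ∨⟩ − g)θ` (scaled so that `s₀ρ = ρ + θ`). -/
def s0 (lam : V) : V := lam - (RootSystemData.pair lam R.θ - R.dualCox) • R.θ

end IrredRootSystemData

section Aux

variable {V : Type} [NormedAddCommGroup V] [InnerProductSpace ℝ V] [FiniteDimensional ℝ V]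

namespace RootSystemData

lemma sRefl_apply (α x : V) : sRefl α x = x - (2 * ⟪x, α⟫ / ⟪α, α⟫) • α := by
  show Submodule.reflection ((ℝ ∙ α)ᗮ) x = _
  rw [Submodule.reflection_orthogonal_apply, Submodule.reflection_singleton_apply,
    real_inner_self_eq_norm_sq, real_inner_comm, two_smul]
  match_scalars <;> simp [RCLike.ofReal_real_eq_id] <;> ring

lemma sRefl_symm_eq (α : V) : (sRefl α).symm = sRefl α := Submodule.reflection_symm

lemma sRefl_inv_eq (α : V) : (sRefl α)⁻¹ = sRefl α := Submodule.reflection_symm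

variable (R : RootSystemData V)

lemma rho_def : R.ρ = (2 : ℝ)⁻¹ • ∑ φ ∈ R.pos, φ := rfl

lemma pair_def (lam α : V) : pair lam α = 2 * ⟪lam, α⟫ / ⟪α, α⟫ := rfl

lemma mem_inversions (w : V ≃ₗᵢ[ℝ] V) (x : V) :
    x ∈ R.inversions w ↔ x ∈ R.pos ∧ -(w.symm x) ∈ R.pos := by
  classical
  exact Finset.mem_filter

/-- Expressibility as a word in the simple reflections. -/
abbrev HasWord (x : V ≃ₗᵢ[ℝ] V) : Prop :=
  ∃ (k : ℕ) (f : Fin k → Fin R.l),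
    x = (List.ofFn fun j => sRefl (R.simple (f j))).prod

lemma hasWord_mul {x y : V ≃ₗᵢ[ℝ] V} (hx : R.HasWord x) (hy : R.HasWord y) :
    R.HasWord (x * y) := by
  obtain ⟨k1, f1, hf1⟩ := hx
  obtain ⟨k2, f2, hf2⟩ := hy
  refine ⟨k1 + k2, Fin.append f1 f2, ?_⟩
  have hfun : (fun j : Fin (k1 + k2) => sRefl (R.simple (Fin.append f1 f2 j))) =
      Fin.append (fun j => sRefl (R.simple (f1 j)))
        (fun j => sRefl (R.simple (f2 j))) := by
    funext j
    refine Fin.addCases (fun i => ?_) (fun i => ?_) j <;>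
      simp [Fin.append_left, Fin.append_right]
  rw [hfun, List.ofFn_fin_append, List.prod_append, ← hf1, ← hf2]

lemma sRefl_root_mem {α β : V} (hα : α ∈ R.roots) (hβ : β ∈ R.roots) :
    sRefl α β ∈ R.roots := by
  rw [sRefl_apply]; exact R.reflect_mem α hα β hβ

lemma coeff_zero (e : Fin R.l → ℝ) (h : ∑ i, e i • R.simple i = 0) : ∀ i, e i = 0 :=
  Fintype.linearIndependent_iff.mp R.simple_indep e h

/-- A simple reflection sends a positive root other than the simple root itself
to a positive root. -/
lemma simple_of_pos_of_sRefl_neg {i : Fin R.l} {y : V} (hy : y ∈ R.pos)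
    (hneg : sRefl (R.simple i) y ∉ R.pos) : y = R.simple i := by
  classical
  have hyr : y ∈ R.roots := R.pos_subset hy
  have hαr : R.simple i ∈ R.roots := R.pos_subset (R.simple_mem_pos i)
  have hsr : sRefl (R.simple i) y ∈ R.roots := R.sRefl_root_mem hαr hyr
  have hneg' : -(sRefl (R.simple i) y) ∈ R.pos := by
    refine (R.pos_iff _ (R.neg_mem _ hsr)).mpr ?_
    rw [neg_neg]
    exact hneg
  obtain ⟨b, hb⟩ := R.pos_combo y hy
  obtain ⟨d, hd⟩ := R.pos_combo _ hneg'
  set c : ℝ := 2 * ⟪y, R.simple i⟫ / ⟪R.simple i, R.simple i⟫ with hc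
  have key : ∑ j, ((b j : ℝ) + (d j : ℝ) - (if j = i then c else 0)) • R.simple j = 0 := by
    have h2 : ∑ j, (if j = i then c else 0 : ℝ) • R.simple j = c • R.simple i := by
      have he : ∀ j ∈ Finset.univ, (if j = i then c else 0 : ℝ) • R.simple j
          = if j = i then c • R.simple i else 0 := by
        intro j _; split_ifs with h
        · rw [h]
        · rw [zero_smul]
      rw [Finset.sum_congr rfl he, Finset.sum_ite_eq' Finset.univ i]
      simp
    simp only [sub_smul, add_smul, Finset.sum_sub_distrib, Finset.sum_add_distrib]
    rw [h2, ← hb, ← hd]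
    have h4 : sRefl (R.simple i) y = y - c • R.simple i := sRefl_apply _ _
    rw [h4]; abel
  have hco := R.coeff_zero _ key
  have hbzero : ∀ j, j ≠ i → (b j : ℝ) = 0 := by
    intro j hj
    have := hco j
    rw [if_neg hj] at this
    have hb0 : (0:ℝ) ≤ (b j : ℝ) := Nat.cast_nonneg _
    have hd0 : (0:ℝ) ≤ (d j : ℝ) := Nat.cast_nonneg _
    linarith
  have hyb : y = (b i : ℝ) • R.simple i := by
    rw [hb, Finset.sum_eq_single i]
    · intro j _ hj; rw [hbzero j hj, zero_smul]
    · intro h; exact absurd (Finset.mem_univ i) h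
  have hbi : (b i : ℝ) = 1 := by
    rcases R.reduced (R.simple i) hαr (b i) (by rw [← hyb]; exact hyr) with h | h
    · exact h
    · exfalso
      have : (0:ℝ) ≤ (b i : ℝ) := Nat.cast_nonneg _
      rw [h] at this; linarith
  rw [hyb, hbi, one_smul]

/-- Elements of the Weyl group map roots to roots. -/
lemma W_maps_roots {w : V ≃ₗᵢ[ℝ] V} (hw : w ∈ R.W) :
    (∀ β ∈ R.roots, w β ∈ R.roots) ∧ (∀ β ∈ R.roots, w.symm β ∈ R.roots) := by
  refine Subgroup.closure_induction (k := Set.range fun i => sRefl (R.simple i))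
    (p := fun x _ => (∀ β ∈ R.roots, x β ∈ R.roots) ∧ (∀ β ∈ R.roots, x.symm β ∈ R.roots))
    ?_ ?_ ?_ ?_ hw
  · rintro x ⟨i, rfl⟩
    have hαr : R.simple i ∈ R.roots := R.pos_subset (R.simple_mem_pos i)
    refine ⟨fun β hβ => R.sRefl_root_mem hαr hβ, fun β hβ => ?_⟩
    rw [sRefl_symm_eq]
    exact R.sRefl_root_mem hαr hβ
  · exact ⟨fun β hβ => hβ, fun β hβ => hβ⟩
  · rintro x y _ _ ⟨hx1, hx2⟩ ⟨hy1, hy2⟩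
    refine ⟨fun β hβ => hx1 _ (hy1 β hβ), fun β hβ => ?_⟩
    have h : (x * y).symm β = y.symm (x.symm β) := rfl
    rw [h]; exact hy2 _ (hx2 β hβ)
  · rintro x _ ⟨hx1, hx2⟩
    exact ⟨fun β hβ => hx2 β hβ, fun β hβ => hx1 β hβ⟩

/-- Every element of the Weyl group is a word in the simple reflections. -/
lemma exists_word {w : V ≃ₗᵢ[ℝ] V} (hw : w ∈ R.W) : R.HasWord w := by
  have main : R.HasWord w ∧ R.HasWord w⁻¹ := by
    refine Subgroup.closure_induction (k := Set.range fun i => sRefl (R.simple i))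
      (p := fun x _ => R.HasWord x ∧ R.HasWord x⁻¹) ?_ ?_ ?_ ?_ hw
    · rintro x ⟨i, rfl⟩
      have h1 : R.HasWord (sRefl (R.simple i)) := ⟨1, fun _ => i, by simp⟩
      exact ⟨h1, by rw [sRefl_inv_eq]; exact h1⟩
    · exact ⟨⟨0, Fin.elim0, by simp⟩, ⟨0, Fin.elim0, by simp⟩⟩
    · rintro x y _ _ ⟨hx1, hx2⟩ ⟨hy1, hy2⟩
      exact ⟨R.hasWord_mul hx1 hy1, by rw [mul_inv_rev]; exact R.hasWord_mul hy2 hx2⟩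
    · rintro x _ ⟨h1, h2⟩
      exact ⟨h2, by rw [inv_inv]; exact h1⟩
  exact main.1

/-- The length is realized by some word. -/
lemma len_word {w : V ≃ₗᵢ[ℝ] V} (hw : w ∈ R.W) :
    ∃ f : Fin (R.len w) → Fin R.l,
      w = (List.ofFn fun j => sRefl (R.simple (f j))).prod := by
  have hne : {k : ℕ | ∃ f : Fin k → Fin R.l,
      w = (List.ofFn fun j => sRefl (R.simple (f j))).prod}.Nonempty := by
    obtain ⟨k, f, hf⟩ := R.exists_word hw
    exact ⟨k, f, hf⟩
  exact Nat.sInf_mem hne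

/-- Partial products of a word in the simple reflections. -/
def wordProd {k : ℕ} (f : Fin k → Fin R.l) (m : ℕ) : V ≃ₗᵢ[ℝ] V :=
  ((List.ofFn fun j => sRefl (R.simple (f j))).take m).prod

lemma wordProd_zero {k : ℕ} (f : Fin k → Fin R.l) : R.wordProd f 0 = 1 := rfl

lemma wordProd_succ {k : ℕ} (f : Fin k → Fin R.l) {m : ℕ} (hm : m < k) :
    R.wordProd f (m + 1) = R.wordProd f m * sRefl (R.simple (f ⟨m, hm⟩)) := by
  have hmL : m < (List.ofFn fun j => sRefl (R.simple (f j))).length := by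
    rw [List.length_ofFn]; exact hm
  rw [wordProd, wordProd, List.take_succ, List.getElem?_eq_getElem hmL,
    List.prod_append, List.getElem_ofFn]
  simp

lemma wordProd_last {k : ℕ} (f : Fin k → Fin R.l) :
    R.wordProd f k = (List.ofFn fun j => sRefl (R.simple (f j))).prod := by
  rw [wordProd]
  congr 1
  apply List.take_of_length_le
  rw [List.length_ofFn]

/-- The number of inversions is at most the length of any word representing `w`. -/
lemma card_le_word {w : V ≃ₗᵢ[ℝ] V} {k : ℕ} (f : Fin k → Fin R.l)
    (hf : w = (List.ofFn fun j => sRefl (R.simple (f j))).prod) :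
    (R.inversions w).card ≤ k := by
  classical
  have hpk : R.wordProd f k = w := by rw [wordProd_last, hf]
  have hsub : R.inversions w ⊆
      Finset.image (fun j : Fin k => R.wordProd f j (R.simple (f j))) Finset.univ := by
    intro x hx
    rw [R.mem_inversions] at hx
    obtain ⟨hx1, hx2⟩ := hx
    have hy0 : (R.wordProd f 0).symm x = x := by rw [wordProd_zero]; rfl
    have hystep : ∀ m (hm : m < k), (R.wordProd f (m + 1)).symm x
        = sRefl (R.simple (f ⟨m, hm⟩)) ((R.wordProd f m).symm x) := by
      intro m hm
      rw [R.wordProd_succ f hm]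
      have h2 : (R.wordProd f m * sRefl (R.simple (f ⟨m, hm⟩))).symm x
          = (sRefl (R.simple (f ⟨m, hm⟩))).symm ((R.wordProd f m).symm x) := rfl
      rw [h2, sRefl_symm_eq]
    have hyroots : ∀ m, m ≤ k → (R.wordProd f m).symm x ∈ R.roots := by
      intro m
      induction m with
      | zero => intro _; rw [hy0]; exact R.pos_subset hx1
      | succ m ih =>
        intro h
        have hm : m < k := by omega
        rw [hystep m hm]
        exact R.sRefl_root_mem (R.pos_subset (R.simple_mem_pos _)) (ih (by omega))
    have hykne : (R.wordProd f k).symm x ∉ R.pos := by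
      intro hc
      rw [hpk] at hc
      have hr : w.symm x ∈ R.roots := by
        have := hyroots k le_rfl
        rwa [hpk] at this
      exact (R.pos_iff _ hr).mp hc hx2
    have hexists : ∃ m, ∃ hm : m < k, (R.wordProd f m).symm x ∈ R.pos ∧
        (R.wordProd f (m + 1)).symm x ∉ R.pos := by
      by_contra hcon
      push_neg at hcon
      have hall : ∀ m, m ≤ k → (R.wordProd f m).symm x ∈ R.pos := by
        intro m
        induction m with
        | zero => intro _; rw [hy0]; exact hx1
        | succ m ih =>
          intro h
          exact hcon m (by omega) (ih (by omega))
      exact hykne (hall k le_rfl)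
    obtain ⟨m, hm, hym, hym1⟩ := hexists
    have hys : (R.wordProd f m).symm x = R.simple (f ⟨m, hm⟩) := by
      refine R.simple_of_pos_of_sRefl_neg hym ?_
      rw [← hystep m hm]; exact hym1
    have hxe : x = R.wordProd f m (R.simple (f ⟨m, hm⟩)) := by
      rw [← hys]
      exact ((R.wordProd f m).apply_symm_apply x).symm
    exact Finset.mem_image.mpr ⟨⟨m, hm⟩, Finset.mem_univ _, hxe.symm⟩
  calc (R.inversions w).card ≤ _ := Finset.card_le_card hsub
    _ ≤ Finset.univ.card := Finset.card_image_le
    _ = k := by simp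

lemma inversions_card_le_len {w : V ≃ₗᵢ[ℝ] V} (hw : w ∈ R.W) :
    (R.inversions w).card ≤ R.len w := by
  obtain ⟨f, hf⟩ := R.len_word hw
  exact R.card_le_word f hf

/-- The sum of the inversions of `w` equals `ρ - wρ`. -/
lemma sum_inversions {w : V ≃ₗᵢ[ℝ] V} (hw : w ∈ R.W) :
    ∑ ψ ∈ R.inversions w, ψ = R.ρ - w R.ρ := by
  classical
  obtain ⟨hmap, hmaps⟩ := R.W_maps_roots hw
  set I := R.inversions w with hI
  have hIpos : I ⊆ R.pos := Finset.filter_subset _ _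
  have himg : R.pos.image ⇑w = (R.pos \ I) ∪ I.image (fun x => -x) := by
    ext x
    constructor
    · intro hx
      obtain ⟨a, ha, rfl⟩ := Finset.mem_image.mp hx
      by_cases hwx : w a ∈ R.pos
      · apply Finset.mem_union_left
        rw [Finset.mem_sdiff]
        refine ⟨hwx, ?_⟩
        rw [hI, R.mem_inversions]
        rintro ⟨-, hcon⟩
        rw [w.symm_apply_apply] at hcon
        exact (R.pos_iff a (R.pos_subset ha)).mp ha hcon
      · apply Finset.mem_union_right
        have hwa : w a ∈ R.roots := hmap a (R.pos_subset ha)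
        have hneg : -(w a) ∈ R.pos := by
          refine (R.pos_iff _ (R.neg_mem _ hwa)).mpr ?_
          rw [neg_neg]
          exact hwx
        refine Finset.mem_image.mpr ⟨-(w a), ?_, by rw [neg_neg]⟩
        rw [hI, R.mem_inversions]
        refine ⟨hneg, ?_⟩
        have h1 : w.symm (-(w a)) = -a := by simp
        rw [h1, neg_neg]
        exact ha
    · intro hx
      rcases Finset.mem_union.mp hx with hx | hx
      · rw [Finset.mem_sdiff] at hx
        obtain ⟨hxp, hxnI⟩ := hx
        have hxr : x ∈ R.roots := R.pos_subset hxp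
        have h1 : w.symm x ∈ R.roots := hmaps x hxr
        have h2 : -(w.symm x) ∉ R.pos := by
          intro hc
          exact hxnI (by rw [hI, R.mem_inversions]; exact ⟨hxp, hc⟩)
        have h3 : w.symm x ∈ R.pos := (R.pos_iff _ h1).mpr h2
        exact Finset.mem_image.mpr ⟨w.symm x, h3, w.apply_symm_apply x⟩
      · obtain ⟨ψ, hψ, rfl⟩ := Finset.mem_image.mp hx
        rw [hI, R.mem_inversions] at hψ
        obtain ⟨hψp, hψn⟩ := hψ
        exact Finset.mem_image.mpr ⟨-(w.symm ψ), hψn, by simp⟩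
  have hdisj : Disjoint (R.pos \ I) (I.image (fun x => -x)) := by
    rw [Finset.disjoint_left]
    intro x hx hx2
    obtain ⟨ψ, hψ, rfl⟩ := Finset.mem_image.mp hx2
    rw [Finset.mem_sdiff] at hx
    have hψp : ψ ∈ R.pos := hIpos hψ
    exact (R.pos_iff ψ (R.pos_subset hψp)).mp hψp hx.1
  have hsum1 : ∑ x ∈ R.pos.image ⇑w, (fun x => x) x = ∑ α ∈ R.pos, (fun x => x) (w α) :=
    Finset.sum_image (fun a _ b _ h => w.injective h)
  simp only at hsum1
  have hsum2 : ∑ x ∈ I.image (fun x => -x), x = -∑ ψ ∈ I, ψ := by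
    rw [Finset.sum_image (fun a _ b _ h => neg_injective h)]
    exact Finset.sum_neg_distrib (fun x : V => x)
  have hsum3 : ∑ x ∈ R.pos \ I, x = ∑ x ∈ R.pos, x - ∑ x ∈ I, x :=
    Finset.sum_sdiff_eq_sub hIpos
  have hww : ∑ α ∈ R.pos, w α = ∑ x ∈ R.pos, x - (∑ ψ ∈ I, ψ + ∑ ψ ∈ I, ψ) := by
    rw [← hsum1, himg, Finset.sum_union hdisj, hsum2, hsum3]
    abel
  have hwρ : w R.ρ = R.ρ - ∑ ψ ∈ I, ψ := by
    have h0 : w R.ρ = (2:ℝ)⁻¹ • ∑ α ∈ R.pos, w α := by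
      rw [R.rho_def, map_smul, map_sum]
    rw [h0, hww, R.rho_def]
    match_scalars <;> ring
  rw [hwρ]
  abel

end RootSystemData

namespace IrredRootSystemData

variable {V : Type} [NormedAddCommGroup V] [InnerProductSpace ℝ V]
  [FiniteDimensional ℝ V] (R : IrredRootSystemData V)

lemma L_def (φ : V) : R.L φ = 2 * ⟪R.θ - φ, R.toRootSystemData.ρ⟫ / ⟪R.θ, R.θ⟫ := rfl

lemma dualCox_def : R.dualCox = RootSystemData.pair R.toRootSystemData.ρ R.θ + 1 := rfl

lemma theta_inner_pos : (0:ℝ) < ⟪R.θ, R.θ⟫ := by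
  have hne : R.θ ≠ 0 := R.root_ne_zero _ (R.pos_subset R.θ_mem_pos)
  rw [real_inner_self_eq_norm_sq]
  exact pow_pos (norm_pos_iff.mpr hne) 2

/-- For a root `ψ ≠ θ`, the pairing `⟨ψ, θ∨⟩` is at most 1. -/
lemma pair_le_one {ψ : V} (hψ : ψ ∈ R.roots) (hne : ψ ≠ R.θ) :
    RootSystemData.pair ψ R.θ ≤ 1 := by
  have hθr : R.θ ∈ R.roots := R.pos_subset R.θ_mem_pos
  have ht : (0:ℝ) < ⟪R.θ, R.θ⟫ := R.theta_inner_pos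
  obtain ⟨n, hn⟩ := R.crystal R.θ hθr ψ hψ
  have hpair : RootSystemData.pair ψ R.θ = (n : ℝ) := hn
  rw [hpair]
  by_contra hc
  push_neg at hc
  have hn2 : (2:ℤ) ≤ n := by exact_mod_cast hc
  have hn2' : (2:ℝ) ≤ (n:ℝ) := by exact_mod_cast hn2
  have hip : ⟪R.θ, R.θ⟫ ≤ ⟪ψ, R.θ⟫ := by
    have ht0 : ⟪R.θ, R.θ⟫ ≠ 0 := ne_of_gt ht
    have h1 : 2 * ⟪ψ, R.θ⟫ = (n:ℝ) * ⟪R.θ, R.θ⟫ := by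
      field_simp at hn
      linarith [hn]
    nlinarith
  have hlong : ‖ψ‖ ≤ ‖R.θ‖ := R.θ_long ψ hψ
  have hsq : ‖ψ‖^2 ≤ ‖R.θ‖^2 := by nlinarith [norm_nonneg ψ, norm_nonneg R.θ]
  have hns : ‖ψ - R.θ‖^2 = ‖ψ‖^2 - 2 * ⟪ψ, R.θ⟫ + ‖R.θ‖^2 := norm_sub_sq_real ψ R.θ
  have hθn : ⟪R.θ, R.θ⟫ = ‖R.θ‖^2 := real_inner_self_eq_norm_sq R.θ
  have hzero : ψ - R.θ = 0 := by
    have h1 : ‖ψ - R.θ‖^2 ≤ 0 := by nlinarith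
    have h2 : ‖ψ - R.θ‖ = 0 := by nlinarith [norm_nonneg (ψ - R.θ)]
    exact norm_eq_zero.mp h2
  exact hne (by rw [← sub_eq_zero]; exact hzero)

end IrredRootSystemData

end Aux


open Classical

/-- If the positive long root `φ` is perpendicular to the highest root `θ`
and `w` is the minimal-length element with `wφ = θ`, then `wθ` is a positive
root perpendicular to `θ`, lying in the span of the simple roots
perpendicular to `θ`, and the set `{θ} ∪ {θ − ψ : ψ ∈ Φ_w} ∪ {wθ}` again
satisfies Kostant's criterion for an abelian ideal (`a^{φ,min⁺}`). -/
theorem abelian_ideal_a_phi_min_plus (R : IrredRootSystemData V)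
    (hnorm : ⟪R.θ, R.θ⟫ = 1 / R.dualCox)
    (φ : V) (hφ : φ ∈ R.pos) (hlong : R.IsLong φ) (hperp : ⟪φ, R.θ⟫ = 0)
    (w : V ≃ₗᵢ[ℝ] V) (hwW : w ∈ R.W) (hwφ : w φ = R.θ)
    (hlen : (R.len w : ℝ) = R.L φ)
    (Ψ' : Finset V)
    (hΨ' : Ψ' = insert (w R.θ)
      (insert R.θ ((R.inversions w).image fun ψ => R.θ - ψ))) :
    w R.θ ∈ R.pos ∧ ⟪w R.θ, R.θ⟫ = 0 ∧
    w R.θ ∈ Submodule.span ℝ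
      {α : V | ∃ i, ⟪R.simple i, R.θ⟫ = 0 ∧ α = R.simple i} ∧
    Ψ' ⊆ R.pos ∧ Ψ'.card = R.len w + 2 ∧
    ‖R.ρ + ∑ χ ∈ Ψ', χ‖ ^ 2 - ‖R.ρ‖ ^ 2 = (Ψ'.card : ℝ) := by
  classical
  obtain ⟨hmap, hmaps⟩ := R.toRootSystemData.W_maps_roots hwW
  have hθroot : R.θ ∈ R.roots := R.pos_subset R.θ_mem_pos
  have hθne : R.θ ≠ 0 := R.root_ne_zero _ hθroot
  have ht_pos : (0:ℝ) < ⟪R.θ, R.θ⟫ := R.theta_inner_pos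
  have hφroot : φ ∈ R.roots := R.pos_subset hφ
  set I := R.inversions w with hIdef
  have hIpos : I ⊆ R.pos := Finset.filter_subset _ _
  have hσ : ∑ ψ ∈ I, ψ = R.ρ - w R.ρ := R.toRootSystemData.sum_inversions hwW
  -- θ is not an inversion of w
  have hθnotI : R.θ ∉ I := by
    intro hc
    rw [hIdef, R.toRootSystemData.mem_inversions] at hc
    have hsy : w.symm R.θ = φ := by rw [← hwφ, w.symm_apply_apply]
    rw [hsy] at hc
    exact (R.pos_iff φ hφroot).mp hφ hc.2
  -- L φ is the sum of the pairings of the inversions with θ∨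
  have hφρ : ⟪φ, R.ρ⟫ = ⟪R.θ, w R.ρ⟫ := by
    rw [← hwφ, LinearIsometryEquiv.inner_map_map]
  have hLsum : R.L φ = ∑ ψ ∈ I, RootSystemData.pair ψ R.θ := by
    rw [R.L_def]
    have h1 : ⟪R.θ - φ, R.ρ⟫ = ⟪R.θ, ∑ ψ ∈ I, ψ⟫ := by
      rw [hσ, inner_sub_left, inner_sub_right, hφρ]
    rw [h1, inner_sum, Finset.mul_sum, Finset.sum_div]
    refine Finset.sum_congr rfl fun ψ _ => ?_
    rw [RootSystemData.pair_def, real_inner_comm]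
  have hpair_le : ∀ ψ ∈ I, RootSystemData.pair ψ R.θ ≤ 1 := by
    intro ψ hψ
    have hne : ψ ≠ R.θ := fun h => hθnotI (h ▸ hψ)
    exact R.pair_le_one (R.pos_subset (hIpos hψ)) hne
  have hcard_le : (I.card : ℝ) ≤ (R.len w : ℝ) :=
    Nat.cast_le.mpr (R.toRootSystemData.inversions_card_le_len hwW)
  have hsum_le : ∑ ψ ∈ I, RootSystemData.pair ψ R.θ ≤ (I.card : ℝ) := by
    have := Finset.sum_le_card_nsmul I _ 1 (fun ψ hψ => hpair_le ψ hψ)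
    rwa [nsmul_eq_mul, mul_one] at this
  have hsum_eq : ∑ ψ ∈ I, RootSystemData.pair ψ R.θ = (I.card : ℝ) := by
    rw [← hLsum]; rw [← hLsum] at hsum_le
    linarith [hlen ▸ hsum_le, hlen ▸ hcard_le]
  have hcard_len : (I.card : ℝ) = (R.len w : ℝ) := by
    rw [← hsum_eq, ← hLsum]; linarith [hlen]
  have hcard_eq : I.card = R.len w := Nat.cast_injective hcard_len
  -- each inversion pairs to exactly 1 with θ∨
  have hpair_one : ∀ ψ ∈ I, RootSystemData.pair ψ R.θ = 1 := by
    have hzero : ∑ ψ ∈ I, (1 - RootSystemData.pair ψ R.θ) = 0 := by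
      rw [Finset.sum_sub_distrib, Finset.sum_const, hsum_eq, nsmul_eq_mul, mul_one]
      ring
    intro ψ hψ
    have h := (Finset.sum_eq_zero_iff_of_nonneg
      (fun χ hχ => by linarith [hpair_le χ hχ])).mp hzero ψ hψ
    linarith
  have hinner_half : ∀ ψ ∈ I, ⟪R.θ, ψ⟫ = ⟪R.θ, R.θ⟫ / 2 := by
    intro ψ hψ
    have h := hpair_one ψ hψ
    rw [RootSystemData.pair_def] at h
    rw [real_inner_comm]
    have ht : ⟪R.θ, R.θ⟫ ≠ 0 := ne_of_gt ht_pos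
    field_simp at h
    linarith
  -- wθ is a root perpendicular to θ
  have hwθroot : w R.θ ∈ R.roots := hmap _ hθroot
  have hwθθ : ⟪w R.θ, R.θ⟫ = 0 := by
    nth_rewrite 2 [← hwφ]
    rw [LinearIsometryEquiv.inner_map_map, real_inner_comm]
    exact hperp
  -- wθ is positive
  have hwθpos : w R.θ ∈ R.pos := by
    by_contra hc
    have hneg : -(w R.θ) ∈ R.pos := by
      refine (R.pos_iff _ (R.neg_mem _ hwθroot)).mpr ?_
      rw [neg_neg]
      exact hc
    have hmem : -(w R.θ) ∈ I := by
      rw [hIdef, R.toRootSystemData.mem_inversions]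
      refine ⟨hneg, ?_⟩
      have h1 : w.symm (-(w R.θ)) = -R.θ := by simp
      rw [h1, neg_neg]
      exact R.θ_mem_pos
    have h1 := hinner_half _ hmem
    rw [inner_neg_right, real_inner_comm, hwθθ] at h1
    linarith
  -- wθ lies in the span of the simple roots perpendicular to θ
  have hspan : w R.θ ∈ Submodule.span ℝ
      {α : V | ∃ i, ⟪R.simple i, R.θ⟫ = 0 ∧ α = R.simple i} := by
    obtain ⟨c, hc⟩ := R.pos_combo _ hwθpos
    have hzero : ∑ i, (c i : ℝ) * ⟪R.simple i, R.θ⟫ = 0 := by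
      have h1 : ⟪w R.θ, R.θ⟫ = ∑ i, (c i : ℝ) * ⟪R.simple i, R.θ⟫ := by
        rw [hc, sum_inner]
        exact Finset.sum_congr rfl fun i _ => real_inner_smul_left _ _ _
      rw [← h1, hwθθ]
    have hterm : ∀ i ∈ Finset.univ, (0:ℝ) ≤ (c i : ℝ) * ⟪R.simple i, R.θ⟫ :=
      fun i _ => mul_nonneg (Nat.cast_nonneg _)
        (by rw [real_inner_comm]; exact R.θ_dominant i)
    have hall := (Finset.sum_eq_zero_iff_of_nonneg hterm).mp hzero
    rw [hc]
    refine Submodule.sum_mem _ fun i _ => ?_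
    by_cases hi : ⟪R.simple i, R.θ⟫ = 0
    · exact Submodule.smul_mem _ _ (Submodule.subset_span ⟨i, hi, rfl⟩)
    · have hci : (c i : ℝ) = 0 := by
        rcases mul_eq_zero.mp (hall i (Finset.mem_univ i)) with h | h
        exacts [h, absurd h hi]
      rw [hci, zero_smul]
      exact Submodule.zero_mem _
  -- θ - ψ is a positive root for every inversion ψ
  have hsub_pos : ∀ ψ ∈ I, R.θ - ψ ∈ R.pos := by
    intro ψ hψ
    have hψp : ψ ∈ R.pos := hIpos hψ
    have hψr : ψ ∈ R.roots := R.pos_subset hψp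
    have hne : R.θ ≠ ψ := fun h => hθnotI (h ▸ hψ)
    have hip : (0:ℝ) < ⟪R.θ, ψ⟫ := by
      rw [hinner_half ψ hψ]; linarith
    have hr : R.θ - ψ ∈ R.roots := R.sub_mem _ hθroot _ hψr hip hne
    by_contra hc
    have hneg : ψ - R.θ ∈ R.pos := by
      have h := (R.pos_iff _ (R.neg_mem _ hr)).mpr (by rw [neg_neg]; exact hc)
      rwa [neg_sub] at h
    obtain ⟨e, he⟩ := R.θ_highest ψ hψp
    obtain ⟨d, hd⟩ := R.pos_combo _ hneg
    have hzero : ∑ i, ((e i : ℝ) + (d i : ℝ)) • R.simple i = 0 := by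
      have h1 : ∑ i, ((e i : ℝ) + (d i : ℝ)) • R.simple i
          = (∑ i, (e i : ℝ) • R.simple i) + ∑ i, (d i : ℝ) • R.simple i := by
        rw [← Finset.sum_add_distrib]
        exact Finset.sum_congr rfl fun i _ => add_smul _ _ _
      rw [h1, ← he, ← hd]
      abel
    have hco := R.toRootSystemData.coeff_zero _ hzero
    have hzero2 : ψ - R.θ = 0 := by
      rw [hd]
      refine Finset.sum_eq_zero fun i _ => ?_
      have h := hco i
      have h1 : (0:ℝ) ≤ (e i : ℝ) := Nat.cast_nonneg _
      have h2 : (0:ℝ) ≤ (d i : ℝ) := Nat.cast_nonneg _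
      have h3 : (d i : ℝ) = 0 := by linarith
      rw [h3, zero_smul]
    exact R.root_ne_zero _ (R.pos_subset hneg) hzero2
  -- Ψ' is a set of positive roots
  have hsubset : Ψ' ⊆ R.pos := by
    rw [hΨ']
    intro x hx
    rcases Finset.mem_insert.mp hx with rfl | hx
    · exact hwθpos
    rcases Finset.mem_insert.mp hx with rfl | hx
    · exact R.θ_mem_pos
    obtain ⟨ψ, hψ, rfl⟩ := Finset.mem_image.mp hx
    exact hsub_pos ψ hψ
  -- cardinality of Ψ'
  have himgcard : (I.image fun ψ => R.θ - ψ).card = I.card :=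
    Finset.card_image_of_injOn fun a _ b _ h => sub_right_injective h
  have hθnotimg : R.θ ∉ I.image fun ψ => R.θ - ψ := by
    intro hc
    obtain ⟨ψ, hψ, h⟩ := Finset.mem_image.mp hc
    have hψ0 : ψ = 0 := sub_eq_self.mp h
    exact R.root_ne_zero ψ (R.pos_subset (hIpos hψ)) hψ0
  have hwθnot : w R.θ ∉ insert R.θ (I.image fun ψ => R.θ - ψ) := by
    intro hc
    rcases Finset.mem_insert.mp hc with h | h
    · rw [h] at hwθθ
      exact absurd hwθθ (ne_of_gt ht_pos)
    · obtain ⟨ψ, hψ, h⟩ := Finset.mem_image.mp h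
      have h2 : ⟪R.θ - ψ, R.θ⟫ = ⟪R.θ, R.θ⟫ / 2 := by
        rw [inner_sub_left]
        have h3 := hinner_half ψ hψ
        have h4 : ⟪ψ, R.θ⟫ = ⟪R.θ, ψ⟫ := real_inner_comm _ _
        linarith
      rw [h, hwθθ] at h2
      linarith
  have hcard : Ψ'.card = R.len w + 2 := by
    rw [hΨ', Finset.card_insert_of_notMem hwθnot,
      Finset.card_insert_of_notMem hθnotimg, himgcard, hcard_eq]
  -- the sum over Ψ'
  have hsumΨ : ∑ χ ∈ Ψ', χ
      = w R.θ + (((R.len w : ℝ) + 1) • R.θ - ∑ ψ ∈ I, ψ) := by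
    rw [hΨ', Finset.sum_insert hwθnot, Finset.sum_insert hθnotimg,
      Finset.sum_image (fun a _ b _ h => sub_right_injective h)]
    rw [Finset.sum_sub_distrib, Finset.sum_const, hcard_eq]
    congr 1
    have h1 : R.len w • R.θ = (R.len w : ℝ) • R.θ := (Nat.cast_smul_eq_nsmul ℝ _ _).symm
    rw [h1]
    match_scalars <;> ring
  -- the Kostant criterion computation
  have hvec : R.ρ + ∑ χ ∈ Ψ', χ = ((R.len w : ℝ) + 1) • R.θ + w (R.ρ + R.θ) := by
    rw [hsumΨ, hσ, map_add]
    abel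
  have e1 : ⟪R.θ, R.θ⟫ * R.dualCox = 1 := by
    have hg0 : R.dualCox ≠ 0 := by
      intro h
      rw [h, div_zero] at hnorm
      exact ne_of_gt ht_pos hnorm
    rw [hnorm]
    field_simp
  have e2 : 2 * ⟪R.ρ, R.θ⟫ = (R.dualCox - 1) * ⟪R.θ, R.θ⟫ := by
    have h1 : R.dualCox = 2 * ⟪R.ρ, R.θ⟫ / ⟪R.θ, R.θ⟫ + 1 := by
      rw [R.dualCox_def, RootSystemData.pair_def]
    have ht0 : ⟪R.θ, R.θ⟫ ≠ 0 := ne_of_gt ht_pos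
    field_simp at h1
    linarith
  have e3 : (R.len w : ℝ) * ⟪R.θ, R.θ⟫ = 2 * ⟪R.ρ, R.θ⟫ - 2 * ⟪φ, R.ρ⟫ := by
    have h1 : (R.len w : ℝ) = 2 * (⟪R.θ, R.ρ⟫ - ⟪φ, R.ρ⟫) / ⟪R.θ, R.θ⟫ := by
      rw [hlen, R.L_def, inner_sub_left]
    have ht0 : ⟪R.θ, R.θ⟫ ≠ 0 := ne_of_gt ht_pos
    have h2 : ⟪R.θ, R.ρ⟫ = ⟪R.ρ, R.θ⟫ := real_inner_comm _ _
    field_simp at h1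
    linarith
  have hθwρ : ⟪R.θ, w R.ρ⟫ = ⟪φ, R.ρ⟫ := hφρ.symm
  have hθwθ : ⟪R.θ, w R.θ⟫ = 0 := by rw [real_inner_comm]; exact hwθθ
  have hnorm_sq : ‖R.ρ + ∑ χ ∈ Ψ', χ‖^2
      = ((R.len w : ℝ)+1)^2 * ⟪R.θ, R.θ⟫ + 2 * ((R.len w : ℝ)+1) * ⟪φ, R.ρ⟫
        + (‖R.ρ‖^2 + 2 * ⟪R.ρ, R.θ⟫ + ⟪R.θ, R.θ⟫) := by
    rw [hvec, norm_add_sq_real]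
    have ha : ‖((R.len w : ℝ) + 1) • R.θ‖^2 = ((R.len w : ℝ)+1)^2 * ⟪R.θ, R.θ⟫ := by
      rw [← real_inner_self_eq_norm_sq, real_inner_smul_left, real_inner_smul_right]
      ring
    have hb : ⟪((R.len w : ℝ) + 1) • R.θ, w (R.ρ + R.θ)⟫
        = ((R.len w : ℝ)+1) * ⟪φ, R.ρ⟫ := by
      rw [real_inner_smul_left, map_add, inner_add_right, hθwρ, hθwθ]
      ring
    have hc2 : ‖w (R.ρ + R.θ)‖^2 = ‖R.ρ‖^2 + 2 * ⟪R.ρ, R.θ⟫ + ⟪R.θ, R.θ⟫ := by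
      rw [LinearIsometryEquiv.norm_map, norm_add_sq_real, real_inner_self_eq_norm_sq]
    rw [ha, hb, hc2]
    ring
  refine ⟨hwθpos, hwθθ, hspan, hsubset, hcard, ?_⟩
  rw [hnorm_sq, hcard]
  push_cast
  linear_combination ((R.len w : ℝ)+1) * e3 + ((R.len w : ℝ)+2) * e2
    + ((R.len w : ℝ)+2) * e1
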